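/- Let k ≥ 2 be an integer and λ > 1. Then there is c > 0 depending only on k and λ such that for any nonempty finite set Z and any S ⊆ {1,...,k}^Z with |S| ≥ ((k−1)λ)^{|Z|}, there exists J ⊆ Z such that |J| ≥ c|Z| and the restriction of S to J is all of {1,...,k}^J. -/

import Mathlib

open Finset

def phiKM (k : ℕ) : ℕ → ℕ → ℕ
  | _, 0 => 0
  | 0, _ + 1 => 1
  | n + 1, d + 1 => (k - 1) * phiKM k n (d + 1) + phiKM k n d

lemma shatter_aux (k : ℕ) (hk : 2 ≤ k) [NeZero k] {Z : Type} [DecidableEq Z] :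
    ∀ (n d : ℕ) (A : Finset Z) (S : Finset (Z → Fin k)),
      A.card = n → (∀ f ∈ S, ∀ z ∉ A, f z = 0) → phiKM k n d < S.card →
      ∃ J ⊆ A, d ≤ J.card ∧ ∀ g : Z → Fin k, ∃ f ∈ S, ∀ z ∈ J, f z = g z := by
  classical
  intro n
  induction n with
  | zero =>
    intro d A S hA hsupp hcard
    match d with
    | 0 =>
      refine ⟨∅, empty_subset _, le_refl _, fun g => ?_⟩
      obtain ⟨f, hf⟩ := card_pos.mp (by omega : 0 < S.card)
      exact ⟨f, hf, fun z hz => absurd hz (notMem_empty z)⟩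
    | d + 1 =>
      exfalso
      have hAe : A = ∅ := card_eq_zero.mp hA
      have : S ⊆ {fun _ => 0} := by
        intro f hf
        simp only [mem_singleton]
        funext z
        exact hsupp f hf z (by simp [hAe])
      have := card_le_card this
      simp only [card_singleton] at this
      simp only [phiKM] at hcard
      omega
  | succ n ih =>
    intro d A S hA hsupp hcard
    match d with
    | 0 =>
      refine ⟨∅, empty_subset _, le_refl _, fun g => ?_⟩
      obtain ⟨f, hf⟩ := card_pos.mp (by omega : 0 < S.card)
      exact ⟨f, hf, fun z hz => absurd hz (notMem_empty z)⟩
    | d + 1 =>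
      obtain ⟨z, hz⟩ := card_pos.mp (by omega : 0 < A.card)
      set A' := A.erase z with hA'
      have hA2card : A'.card = n := by rw [hA', card_erase_of_mem hz, hA]; omega
      set R := S.image (fun f => Function.update f z 0) with hR
      set T := R.filter (fun g => ∀ v : Fin k, Function.update g z v ∈ S) with hT
      clear_value A' R T
      have hA'mem : ∀ x, x ∈ A' ↔ x ≠ z ∧ x ∈ A := by
        intro x; rw [hA']; exact mem_erase
      have hRmem : ∀ g, g ∈ R ↔ ∃ f ∈ S, Function.update f z 0 = g := by
        intro g; rw [hR]; simp [mem_image]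
      have hTmem : ∀ g, g ∈ T ↔ g ∈ R ∧ ∀ v : Fin k, Function.update g z v ∈ S := by
        intro g; rw [hT]; exact mem_filter
      -- key counting bound
      have hfib : ∀ f ∈ S, f = Function.update (Function.update f z 0) z (f z) := by
        intro f hf
        rw [Function.update_idem, Function.update_eq_self]
      have hcount : S.card ≤ (k - 1) * R.card + T.card := by
        rw [card_eq_sum_card_fiberwise (f := fun f => Function.update f z 0)
          (t := R) (fun f hf => (hRmem _).mpr ⟨f, hf, rfl⟩)]
        have hbound : ∀ g ∈ R,
            (S.filter (fun f => Function.update f z 0 = g)).card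
              ≤ (k - 1) + (if g ∈ T then 1 else 0) := by
          intro g hg
          have hk1 : k ≤ k - 1 + 1 := by omega
          set F := S.filter (fun f => Function.update f z 0 = g) with hF
          clear_value F
          have hFmem : ∀ f ∈ F, f ∈ S ∧ f = Function.update g z (f z) := by
            intro f hf
            rw [hF, mem_filter] at hf
            refine ⟨hf.1, ?_⟩
            rw [← hf.2]
            exact hfib f hf.1
          have hinj : Set.InjOn (fun f : Z → Fin k => f z) (F : Set (Z → Fin k)) := by
            intro f1 h1 f2 h2 h12
            rw [(hFmem f1 h1).2, (hFmem f2 h2).2]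
            simp only at h12
            rw [h12]
          have hcardF : F.card = (F.image (fun f => f z)).card :=
            (card_image_of_injOn hinj).symm
          by_cases hgT : g ∈ T
          · rw [if_pos hgT]
            have h2 : (F.image (fun f => f z)).card ≤ k := by
              simpa using card_le_card (subset_univ (F.image (fun f => f z)))
            rw [hcardF]
            exact h2.trans hk1
          · rw [if_neg hgT]
            rw [hTmem] at hgT
            push_neg at hgT
            obtain ⟨v₀, hv₀⟩ := hgT hg
            have hsub : F.image (fun f => f z) ⊆ univ.erase v₀ := by
              intro v hv
              rw [mem_image] at hv
              obtain ⟨f, hf, hfz⟩ := hv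
              refine mem_erase.mpr ⟨?_, mem_univ _⟩
              intro hvv
              apply hv₀
              rw [← hvv, ← hfz, ← (hFmem f hf).2]
              exact (hFmem f hf).1
            have h3 := card_le_card hsub
            rw [card_erase_of_mem (mem_univ _)] at h3
            simp only [card_univ, Fintype.card_fin] at h3
            rw [hcardF]
            exact h3
        calc ∑ g ∈ R, (S.filter (fun f => Function.update f z 0 = g)).card
            ≤ ∑ g ∈ R, ((k - 1) + (if g ∈ T then 1 else 0)) :=
              sum_le_sum hbound
          _ = (k - 1) * R.card + ∑ g ∈ R, (if g ∈ T then 1 else 0) := by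
              rw [sum_add_distrib, sum_const, smul_eq_mul, mul_comm]
          _ = (k - 1) * R.card + T.card := by
              congr 1
              rw [sum_ite_mem, inter_eq_right.mpr (by rw [hT]; exact filter_subset _ _)]
              simp
      simp only [phiKM] at hcard
      by_cases hRcard : phiKM k n (d + 1) < R.card
      · -- use R on A'
        have hRsupp : ∀ g ∈ R, ∀ z' ∉ A', g z' = 0 := by
          intro g hg z' hz'
          rw [hRmem] at hg
          obtain ⟨f, hf, rfl⟩ := hg
          by_cases hzz : z' = z
          · rw [hzz, Function.update_self]
          · rw [Function.update_of_ne hzz]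
            exact hsupp f hf z' (fun hmem => hz' ((hA'mem z').mpr ⟨hzz, hmem⟩))
        obtain ⟨J, hJA, hJcard, hJsh⟩ := ih (d + 1) A' R hA2card hRsupp hRcard
        have hJA2 : J ⊆ A := fun x hx => ((hA'mem x).mp (hJA hx)).2
        refine ⟨J, hJA2, hJcard, fun g => ?_⟩
        obtain ⟨f', hf', hagree⟩ := hJsh g
        rw [hRmem] at hf'
        obtain ⟨f, hf, rfl⟩ := hf'
        refine ⟨f, hf, fun z' hz' => ?_⟩
        have hzz : z' ≠ z := ((hA'mem z').mp (hJA hz')).1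
        rw [← hagree z' hz', Function.update_of_ne hzz]
      · have hTcard : phiKM k n d < T.card := by
          have h1 : (k - 1) * R.card ≤ (k - 1) * phiKM k n (d + 1) :=
            Nat.mul_le_mul_left _ (by omega)
          omega
        have hTsupp : ∀ g ∈ T, ∀ z' ∉ A', g z' = 0 := by
          intro g hg z' hz'
          obtain ⟨hgR, _⟩ := (hTmem g).mp hg
          rw [hRmem] at hgR
          obtain ⟨f, hf, rfl⟩ := hgR
          by_cases hzz : z' = z
          · rw [hzz, Function.update_self]
          · rw [Function.update_of_ne hzz]
            exact hsupp f hf z' (fun hmem => hz' ((hA'mem z').mpr ⟨hzz, hmem⟩))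
        obtain ⟨J, hJA, hJcard, hJsh⟩ := ih d A' T hA2card hTsupp hTcard
        have hzJ : z ∉ J := fun h => ((hA'mem z).mp (hJA h)).1 rfl
        refine ⟨insert z J, ?_, ?_, fun g => ?_⟩
        · intro x hx
          rcases mem_insert.mp hx with rfl | hx
          · exact hz
          · exact ((hA'mem x).mp (hJA hx)).2
        · rw [card_insert_of_notMem hzJ]; omega
        · obtain ⟨h, hh, hagree⟩ := hJsh g
          obtain ⟨_, hhall⟩ := (hTmem h).mp hh
          refine ⟨Function.update h z (g z), hhall (g z), fun z' hz' => ?_⟩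
          rcases mem_insert.mp hz' with rfl | hz'
          · rw [Function.update_self]
          · have hzz : z' ≠ z := fun h' => hzJ (h' ▸ hz')
            rw [Function.update_of_ne hzz]
            exact hagree z' hz'

lemma psi_succ (n d : ℕ) :
    ∑ i ∈ Finset.range (d + 1), (n + 1).choose i
      = ∑ i ∈ Finset.range (d + 1), n.choose i + ∑ i ∈ Finset.range d, n.choose i := by
  rw [Finset.sum_range_succ' (fun i => (n + 1).choose i) d,
      Finset.sum_range_succ' (fun i => n.choose i) d]
  simp only [Nat.choose_succ_succ, Nat.choose_zero_right, Finset.sum_add_distrib, Nat.succ_eq_add_one]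
  omega

lemma phi_le (k : ℕ) (hk : 2 ≤ k) :
    ∀ n d : ℕ, phiKM k n d ≤ (k - 1) ^ n * ∑ i ∈ Finset.range d, n.choose i := by
  intro n
  induction n with
  | zero =>
    intro d
    match d with
    | 0 => simp [phiKM]
    | d + 1 =>
      have h0 : (0 : ℕ) ∈ Finset.range (d + 1) := by simp
      have h1 : Nat.choose 0 0 ≤ ∑ i ∈ Finset.range (d + 1), Nat.choose 0 i :=
        Finset.single_le_sum (fun i _ => Nat.zero_le _) h0
      simpa [phiKM] using h1
  | succ n ih =>
    intro d
    match d with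
    | 0 => simp [phiKM]
    | d + 1 =>
      have hk1 : 1 ≤ k - 1 := by omega
      calc phiKM k (n + 1) (d + 1)
          = (k - 1) * phiKM k n (d + 1) + phiKM k n d := rfl
        _ ≤ (k - 1) * ((k - 1) ^ n * ∑ i ∈ Finset.range (d + 1), n.choose i)
              + (k - 1) ^ n * ∑ i ∈ Finset.range d, n.choose i := by
            gcongr
            · exact ih (d + 1)
            · exact ih d
        _ ≤ (k - 1) ^ (n + 1) * (∑ i ∈ Finset.range (d + 1), n.choose i)
              + (k - 1) ^ (n + 1) * ∑ i ∈ Finset.range d, n.choose i := by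
            have h2 : (k - 1) ^ n ≤ (k - 1) ^ (n + 1) :=
              Nat.pow_le_pow_right (by omega) (by omega)
            have h3 : (k - 1) * ((k - 1) ^ n * ∑ i ∈ Finset.range (d + 1), n.choose i)
                = (k - 1) ^ (n + 1) * ∑ i ∈ Finset.range (d + 1), n.choose i := by
              ring
            rw [h3]
            gcongr
        _ = (k - 1) ^ (n + 1) * ∑ i ∈ Finset.range (d + 1), (n + 1).choose i := by
            rw [psi_succ]
            ring

lemma psi_bound (n d : ℕ) (t : ℝ) (ht0 : 0 < t) (ht1 : t ≤ 1) (hd : d ≤ n + 1) :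
    (∑ i ∈ Finset.range d, (n.choose i : ℝ)) * t ^ (d - 1) ≤ (1 + t) ^ n := by
  have hbin : (1 + t) ^ n = ∑ i ∈ Finset.range (n + 1), (n.choose i : ℝ) * t ^ i := by
    rw [add_comm, add_pow]
    simp [mul_comm]
  rw [hbin, Finset.sum_mul]
  calc ∑ i ∈ Finset.range d, (n.choose i : ℝ) * t ^ (d - 1)
      ≤ ∑ i ∈ Finset.range d, (n.choose i : ℝ) * t ^ i := by
        refine Finset.sum_le_sum fun i hi => ?_
        refine mul_le_mul_of_nonneg_left ?_ (Nat.cast_nonneg _)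
        exact pow_le_pow_of_le_one ht0.le ht1 (by
          have := Finset.mem_range.mp hi; omega)
    _ ≤ ∑ i ∈ Finset.range (n + 1), (n.choose i : ℝ) * t ^ i := by
        refine Finset.sum_le_sum_of_subset_of_nonneg
          (Finset.range_subset_range.mpr hd) fun i _ _ => ?_
        positivity

theorem karpovsky_milman (k : ℕ) (hk : 2 ≤ k) (lam : ℝ) (hlam : 1 < lam) :
    ∃ c : ℝ, 0 < c ∧
      ∀ (Z : Type) [Fintype Z] [Nonempty Z] (S : Finset (Z → Fin k)),
        (((k : ℝ) - 1) * lam) ^ Fintype.card Z ≤ (S.card : ℝ) →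
        ∃ J : Finset Z, c * (Fintype.card Z : ℝ) ≤ J.card ∧
          ∀ g : Z → Fin k, ∃ f ∈ S, ∀ z ∈ J, f z = g z := by
  haveI : NeZero k := ⟨by omega⟩
  have hK1 : (1 : ℝ) ≤ (k : ℝ) - 1 := by
    have : (2 : ℝ) ≤ (k : ℝ) := by exact_mod_cast hk
    linarith
  set t := min (1/2 : ℝ) ((lam - 1)/2) with htdef
  have ht0 : 0 < t := lt_min (by norm_num) (by linarith)
  have ht12 : t ≤ 1/2 := min_le_left _ _
  have ht1 : t ≤ 1 := by linarith
  have h1t : 1 + t < lam := by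
    have := min_le_right (1/2 : ℝ) ((lam - 1)/2)
    have h2 : t ≤ (lam - 1)/2 := this
    linarith
  have h1t0 : (0 : ℝ) < 1 + t := by linarith
  have hinv1 : (1 : ℝ) < 1/t := by
    rw [lt_div_iff₀ ht0]; linarith
  have hlogt : 0 < Real.log (1/t) := Real.log_pos hinv1
  have hrgt : 1 < lam / (1 + t) := (one_lt_div h1t0).mpr (by linarith)
  have hlogr : 0 < Real.log (lam / (1 + t)) := Real.log_pos hrgt
  set c := min 1 (Real.log (lam / (1 + t)) / (2 * Real.log (1/t))) with hcdef
  have hc0 : 0 < c := lt_min one_pos (div_pos hlogr (by linarith))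
  have hc1 : c ≤ 1 := min_le_left _ _
  have hbase : (1/t : ℝ) ^ (c : ℝ) < lam / (1 + t) := by
    rw [Real.rpow_def_of_pos (by positivity)]
    have hcle : Real.log (1/t) * c ≤ Real.log (lam / (1 + t)) / 2 := by
      have hmin : c ≤ Real.log (lam / (1 + t)) / (2 * Real.log (1/t)) :=
        min_le_right _ _
      calc Real.log (1/t) * c
          ≤ Real.log (1/t) * (Real.log (lam / (1 + t)) / (2 * Real.log (1/t))) :=
            mul_le_mul_of_nonneg_left hmin hlogt.le
        _ = Real.log (lam / (1 + t)) / 2 := by field_simp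
    calc Real.exp (Real.log (1/t) * c)
        ≤ Real.exp (Real.log (lam / (1 + t)) / 2) := Real.exp_le_exp.mpr hcle
      _ < Real.exp (Real.log (lam / (1 + t))) := Real.exp_lt_exp.mpr (by linarith)
      _ = lam / (1 + t) := Real.exp_log (by positivity)
  have hrpow1 : (1 : ℝ) ≤ (1/t : ℝ) ^ (c : ℝ) :=
    Real.one_le_rpow hinv1.le hc0.le
  have hbase' : (1 + t) * (1/t : ℝ) ^ (c : ℝ) < lam := by
    rw [div_eq_mul_inv] at hbase
    calc (1 + t) * (1/t : ℝ) ^ (c : ℝ)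
        < (1 + t) * (lam * (1 + t)⁻¹) := by
          exact mul_lt_mul_of_pos_left hbase h1t0
      _ = lam := by field_simp
  refine ⟨c, hc0, ?_⟩
  intro Z _ _ S hS
  letI := Classical.decEq Z
  set n := Fintype.card Z with hn
  have hn1 : 1 ≤ n := Fintype.card_pos
  have hnR : (1 : ℝ) ≤ (n : ℝ) := by exact_mod_cast hn1
  set d := ⌈c * (n : ℝ)⌉₊ with hd
  have hcn0 : 0 < c * (n : ℝ) := by positivity
  have hd1 : 1 ≤ d := Nat.ceil_pos.mpr hcn0
  have hdn : d ≤ n := Nat.ceil_le.mpr (by nlinarith)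
  have hcd : c * (n : ℝ) ≤ (d : ℝ) := Nat.le_ceil _
  have hdlt : (d : ℝ) < c * (n : ℝ) + 1 := Nat.ceil_lt_add_one hcn0.le
  -- key numeric bound
  have hkey : (phiKM k n d : ℝ) < (((k : ℝ) - 1) * lam) ^ n := by
    have hcast : ((k - 1 : ℕ) : ℝ) = (k : ℝ) - 1 := by
      have : (1 : ℕ) ≤ k := by omega
      push_cast [Nat.cast_sub this]
      ring
    have h1 : (phiKM k n d : ℝ)
        ≤ ((k : ℝ) - 1) ^ n * ∑ i ∈ Finset.range d, (n.choose i : ℝ) := by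
      have := phi_le k hk n d
      have h2 : ((phiKM k n d : ℕ) : ℝ)
          ≤ (((k - 1) ^ n * ∑ i ∈ Finset.range d, n.choose i : ℕ) : ℝ) := by
        exact_mod_cast this
      calc (phiKM k n d : ℝ)
          ≤ (((k - 1) ^ n * ∑ i ∈ Finset.range d, n.choose i : ℕ) : ℝ) := h2
        _ = ((k : ℝ) - 1) ^ n * ∑ i ∈ Finset.range d, (n.choose i : ℝ) := by
            push_cast [hcast]
            ring
    have h2 : (∑ i ∈ Finset.range d, (n.choose i : ℝ)) ≤ (1 + t) ^ n / t ^ (d - 1) := by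
      rw [le_div_iff₀ (pow_pos ht0 _)]
      exact psi_bound n d t ht0 ht1 (by omega)
    have h3 : (1 + t) ^ n / t ^ (d - 1) ≤ (1 + t) ^ n * ((1/t : ℝ) ^ (c : ℝ)) ^ n := by
      rw [div_eq_mul_inv]
      refine mul_le_mul_of_nonneg_left ?_ (by positivity)
      have e1 : (t ^ (d - 1))⁻¹ = (1/t : ℝ) ^ ((d - 1 : ℕ) : ℝ) := by
        rw [Real.rpow_natCast, one_div, inv_pow]
      rw [e1]
      have e2 : ((1/t : ℝ) ^ (c : ℝ)) ^ n = (1/t : ℝ) ^ (c * (n : ℝ)) := by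
        rw [← Real.rpow_natCast ((1/t : ℝ) ^ (c : ℝ)) n, ← Real.rpow_mul (by positivity)]
      rw [e2]
      refine Real.rpow_le_rpow_of_exponent_le hinv1.le ?_
      have : ((d - 1 : ℕ) : ℝ) = (d : ℝ) - 1 := by
        push_cast [Nat.cast_sub hd1]
        ring
      rw [this]
      linarith
    have h4 : ((k : ℝ) - 1) ^ n * ((1 + t) ^ n * ((1/t : ℝ) ^ (c : ℝ)) ^ n)
        = (((k : ℝ) - 1) * ((1 + t) * (1/t : ℝ) ^ (c : ℝ))) ^ n := by
      rw [mul_pow, mul_pow]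
    have h5 : (((k : ℝ) - 1) * ((1 + t) * (1/t : ℝ) ^ (c : ℝ))) ^ n
        < (((k : ℝ) - 1) * lam) ^ n := by
      refine pow_lt_pow_left₀ ?_ (by positivity) (by omega)
      have hKpos : (0 : ℝ) < (k : ℝ) - 1 := by linarith
      exact mul_lt_mul_of_pos_left hbase' hKpos
    calc (phiKM k n d : ℝ)
        ≤ ((k : ℝ) - 1) ^ n * ∑ i ∈ Finset.range d, (n.choose i : ℝ) := h1
      _ ≤ ((k : ℝ) - 1) ^ n * ((1 + t) ^ n / t ^ (d - 1)) := by
          refine mul_le_mul_of_nonneg_left h2 ?_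
          positivity
      _ ≤ ((k : ℝ) - 1) ^ n * ((1 + t) ^ n * ((1/t : ℝ) ^ (c : ℝ)) ^ n) := by
          refine mul_le_mul_of_nonneg_left h3 ?_
          positivity
      _ = (((k : ℝ) - 1) * ((1 + t) * (1/t : ℝ) ^ (c : ℝ))) ^ n := h4
      _ < (((k : ℝ) - 1) * lam) ^ n := h5
  have hphi : phiKM k n d < S.card := by
    have : (phiKM k n d : ℝ) < (S.card : ℝ) := lt_of_lt_of_le hkey hS
    exact_mod_cast this
  obtain ⟨J, _, hJcard, hJsh⟩ :=
    shatter_aux k hk n d (Finset.univ : Finset Z) S (by rw [Finset.card_univ]) 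
      (fun f _ z hz => absurd (Finset.mem_univ z) hz) hphi
  refine ⟨J, ?_, hJsh⟩
  calc c * (n : ℝ) ≤ (d : ℝ) := hcd
    _ ≤ (J.card : ℝ) := by exact_mod_cast hJcard
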